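/- Let I ⊆ Φ⁻ be a nonempty ideal. Then ht(I) equals the maximum k ≥ 1 for which there exist q₁ < q₂ < ⋯ < q_{k+1} in {1,…,n} with (q_{i+1}, q_i) ∈ I for all 1 ≤ i ≤ k; that is, ht(I) is the maximum cardinality of a subset of height k of Φ⁻ contained in I, over all k. -/

import Mathlib

/-- `p` is a negative root of `gl(n)`, encoded as `(i,j)` with `1 ≤ j < i ≤ n`. -/
def IsNegRoot (n : ℕ) (p : ℕ × ℕ) : Prop := 1 ≤ p.2 ∧ p.2 < p.1 ∧ p.1 ≤ n

/-- `I` is an ideal in `Φ⁻`. -/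
def IsIdeal (n : ℕ) (I : Set (ℕ × ℕ)) : Prop :=
  (∀ p ∈ I, IsNegRoot n p) ∧
  (∀ i j, (i, j) ∈ I → ∀ k, i < k → k ≤ n → (k, j) ∈ I) ∧
  (∀ i j, (i, j) ∈ I → ∀ l, 1 ≤ l → l < j → (i, l) ∈ I)

/-- The lower central series of `I`: `I₁ = I`, and
`I_m = {(i,k) : ∃ j, i > j > k, ((i,j) ∈ I ∧ (j,k) ∈ I_{m−1}) ∨ ((i,j) ∈ I_{m−1} ∧ (j,k) ∈ I)}`. -/
def lcs (I : Set (ℕ × ℕ)) : ℕ → Set (ℕ × ℕ)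
  | 0 => ∅
  | 1 => I
  | m + 2 =>
      {p | ∃ j, p.2 < j ∧ j < p.1 ∧
        (((p.1, j) ∈ I ∧ (j, p.2) ∈ lcs I (m + 1)) ∨
          ((p.1, j) ∈ lcs I (m + 1) ∧ (j, p.2) ∈ I))}

/-- The height of an ideal: the largest `m ≥ 1` with `I_m ≠ ∅` (and `0` if `I = ∅`). -/
noncomputable def heightIdeal (I : Set (ℕ × ℕ)) : ℕ :=
  sSup {m | 1 ≤ m ∧ lcs I m ≠ ∅}

lemma chain_mono (q : ℕ → ℕ) (k : ℕ) (h : ∀ i < k, q i < q (i+1)) :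
    ∀ a b, a < b → b ≤ k → q a < q b := by
  intro a b hab hbk
  induction b with
  | zero => omega
  | succ b ih =>
    rcases Nat.lt_succ_iff_lt_or_eq.mp hab with h' | h'
    · exact lt_trans (ih h' (by omega)) (h b (by omega))
    · subst h'; exact h a (by omega)

lemma chain_add (q : ℕ → ℕ) (k : ℕ) (h : ∀ i < k, q i < q (i+1)) :
    ∀ b ≤ k, q 0 + b ≤ q b := by
  intro b hb
  induction b with
  | zero => omega
  | succ b ih => have := h b (by omega); have := ih (by omega); omega

lemma lcs_iff (n : ℕ) (I : Set (ℕ × ℕ)) (hI : IsIdeal n I) :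
    ∀ m p, p ∈ lcs I (m+1) ↔
      ∃ q : ℕ → ℕ, (∀ i < m+1, (q (i+1), q i) ∈ I) ∧ (∀ i < m+1, q i < q (i+1)) ∧
        p.1 = q (m+1) ∧ p.2 = q 0 := by
  intro m
  induction m with
  | zero =>
    intro p
    constructor
    · intro hp
      have hr := hI.1 p hp
      refine ⟨fun i => if i = 0 then p.2 else p.1, ?_, ?_, by simp, by simp⟩
      · intro i hi
        have : i = 0 := by omega
        subst this
        simpa [lcs] using hp
      · intro i hi
        have : i = 0 := by omega
        subst this
        simpa using hr.2.1
    · rintro ⟨q, h1, h2, h3, h4⟩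
      have hp : p = (q 1, q 0) := Prod.ext h3 h4
      rw [hp]
      exact h1 0 (by omega)
  | succ m IH =>
    intro p
    constructor
    · intro hp
      obtain ⟨j, hj1, hj2, hcase⟩ := hp
      rcases hcase with ⟨hI1, hL⟩ | ⟨hL, hI1⟩
      · obtain ⟨q, h1, h2, h3, h4⟩ := (IH (j, p.2)).mp hL
        simp only at h3 h4
        refine ⟨fun i => if i = m+2 then p.1 else q i, ?_, ?_, by simp, by simp [h4]⟩
        · intro i hi
          by_cases h : i = m + 1
          · subst h
            simp only [if_pos rfl, if_neg (by omega : (m+1:ℕ) ≠ m+2)]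
            rw [← h3]; exact hI1
          · simp only [if_neg (by omega : i + 1 ≠ m+2), if_neg (by omega : i ≠ m+2)]
            exact h1 i (by omega)
        · intro i hi
          by_cases h : i = m + 1
          · subst h
            simp only [if_pos rfl, if_neg (by omega : (m+1:ℕ) ≠ m+2)]
            rw [← h3]; exact hj2
          · simp only [if_neg (by omega : i + 1 ≠ m+2), if_neg (by omega : i ≠ m+2)]
            exact h2 i (by omega)
      · obtain ⟨q, h1, h2, h3, h4⟩ := (IH (p.1, j)).mp hL
        simp only at h3 h4
        refine ⟨fun i => if i = 0 then p.2 else q (i - 1), ?_, ?_, ?_, by simp⟩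
        · intro i hi
          by_cases h : i = 0
          · subst h
            simp only [if_neg (by omega : (1:ℕ) ≠ 0), if_pos rfl]
            simpa [← h4] using hI1
          · simp only [if_neg (by omega : i + 1 ≠ 0), if_neg h]
            have : i - 1 + 1 = i + 1 - 1 := by omega
            rw [← this]
            exact h1 (i-1) (by omega)
        · intro i hi
          by_cases h : i = 0
          · subst h
            simpa using h4 ▸ hj1
          · simp only [if_neg (by omega : i + 1 ≠ 0), if_neg h]
            have : i - 1 + 1 = i + 1 - 1 := by omega
            rw [← this]
            exact h2 (i-1) (by omega)
        · simp only [if_neg (by omega : m + 2 ≠ 0)]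
          rw [h3]; norm_num
    · rintro ⟨q, h1, h2, h3, h4⟩
      refine ⟨q (m+1), ?_, ?_, Or.inl ⟨?_, ?_⟩⟩
      · rw [h4]; exact chain_mono q (m+2) h2 0 (m+1) (by omega) (by omega)
      · rw [h3]; exact h2 (m+1) (by omega)
      · rw [h3]; exact h1 (m+1) (by omega)
      · exact (IH (q (m+1), p.2)).mpr ⟨q, fun i hi => h1 i (by omega),
          fun i hi => h2 i (by omega), rfl, h4⟩

theorem stmt5 (n : ℕ) (hn : 1 ≤ n) (I : Set (ℕ × ℕ)) (hI : IsIdeal n I)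
    (hne : I.Nonempty) :
    IsGreatest
      {k | 1 ≤ k ∧ ∃ q : ℕ → ℕ, (∀ i ≤ k, 1 ≤ q i ∧ q i ≤ n) ∧
        (∀ i < k, q i < q (i + 1)) ∧ (∀ i < k, (q (i + 1), q i) ∈ I)}
      (heightIdeal I) := by
  set S : Set ℕ := {m | 1 ≤ m ∧ lcs I m ≠ ∅} with hS
  have hSne : S.Nonempty := ⟨1, le_refl 1, by simpa [lcs] using Set.nonempty_iff_ne_empty.mp hne⟩
  have hSbdd : BddAbove S := by
    refine ⟨n, fun m hm => ?_⟩
    obtain ⟨hm1, hm2⟩ := hm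
    obtain ⟨m', rfl⟩ : ∃ m', m = m' + 1 := ⟨m - 1, by omega⟩
    obtain ⟨p, hp⟩ := Set.nonempty_iff_ne_empty.mpr hm2
    obtain ⟨q, h1, h2, h3, h4⟩ := (lcs_iff n I hI m' p).mp hp
    have hlo := hI.1 _ (h1 0 (by omega))
    have hhi := hI.1 _ (h1 m' (by omega))
    have := chain_add q (m'+1) h2 (m'+1) (le_refl _)
    unfold IsNegRoot at hlo hhi
    omega
  have hmem : heightIdeal I ∈ S := Nat.sSup_mem hSne hSbdd
  constructor
  · obtain ⟨hk1, hk2⟩ := hmem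
    refine ⟨hk1, ?_⟩
    obtain ⟨m', hm'⟩ : ∃ m', heightIdeal I = m' + 1 := ⟨heightIdeal I - 1, by omega⟩
    rw [hm'] at hk2
    obtain ⟨p, hp⟩ := Set.nonempty_iff_ne_empty.mpr hk2
    obtain ⟨q, h1, h2, h3, h4⟩ := (lcs_iff n I hI m' p).mp hp
    refine ⟨q, ?_, fun i hi => h2 i (by omega), fun i hi => h1 i (by omega)⟩
    intro i hi
    rw [hm'] at hi
    have key : ∀ i < m'+1, 1 ≤ q i ∧ q i < q (i+1) ∧ q (i+1) ≤ n := by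
      intro i hi
      have := hI.1 _ (h1 i hi)
      unfold IsNegRoot at this
      exact this
    by_cases h : i = m' + 1
    · subst h
      have := key m' (by omega)
      omega
    · have := key i (by omega)
      omega
  · intro k hk
    obtain ⟨hk1, q, hq1, hq2, hq3⟩ := hk
    obtain ⟨m', rfl⟩ : ∃ m', k = m' + 1 := ⟨k - 1, by omega⟩
    have : (q (m'+1), q 0) ∈ lcs I (m'+1) :=
      (lcs_iff n I hI m' (q (m'+1), q 0)).mpr ⟨q, hq3, hq2, rfl, rfl⟩
    exact le_csSup hSbdd ⟨hk1, Set.nonempty_iff_ne_empty.mp ⟨_, this⟩⟩
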